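/- For every r ≥ 2 and every n divisible by r, there exists an instance of proxy selection with n voters, with reluctance parameter k > 0, in which the largest coherent set of voters has size r, and no single dRep can achieve an approximation ratio better than n/r. -/

import Mathlib

open Finset

/-- An instance of proxy selection: `intrinsic i j` is voter `i`'s intrinsic approval of
proposal `j`; `visible i j` records whether this preference is revealed to the voter
(the revealed preference is `some (intrinsic i j)` if visible and `⊥` otherwise). -/
structure PSInstance (n m : ℕ) where
  intrinsic : Fin n → Fin m → Bool
  visible : Fin n → Fin m → Bool

namespace PSInstance

variable {n m : ℕ}

/-- Revealed preference of voter `i` on proposal `j`. -/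
def revealed (I : PSInstance n m) (i : Fin n) (j : Fin m) : Option Bool :=
  if I.visible i j then some (I.intrinsic i j) else none

/-- The revealed set `R_i` of voter `i`. -/
def Rset (I : PSInstance n m) (i : Fin n) : Finset (Fin m) :=
  univ.filter fun j => I.visible i j

/-- `m_i = |R_i|`. -/
def mi (I : PSInstance n m) (i : Fin n) : ℕ := (I.Rset i).card

/-- Hamming distance between voter `i`'s revealed ballot and type `t`, restricted to `R_i`. -/
def dist (I : PSInstance n m) (i : Fin n) (t : Fin m → Bool) : ℕ :=
  (univ.filter fun j => I.visible i j ∧ I.intrinsic i j ≠ t j).card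

/-- Voter `i` (with reluctance parameter `k`) is attracted by a dRep of type `t`. -/
def Attracted (I : PSInstance n m) (k : ℕ) (i : Fin n) (t : Fin m → Bool) : Prop :=
  I.dist i t ≤ (I.mi i - k) / 2

instance (I : PSInstance n m) (k : ℕ) (i : Fin n) (t : Fin m → Bool) :
    Decidable (I.Attracted k i t) := by unfold Attracted; exact inferInstance

/-- Intrinsic approval score of proposal `j`. -/
def sc (I : PSInstance n m) (j : Fin m) : ℕ :=
  (univ.filter fun i => I.intrinsic i j = true).card

/-- Revealed approval score of proposal `j`. -/
def rsc (I : PSInstance n m) (j : Fin m) : ℕ :=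
  (univ.filter fun i => I.visible i j ∧ I.intrinsic i j = true).card

/-- `j` is an intrinsically optimal proposal (`win(P)`). -/
def IsOpt (I : PSInstance n m) (j : Fin m) : Prop := ∀ j', I.sc j' ≤ I.sc j

/-- Total score of proposal `j` given a family `D` of dReps and a delegation assignment
`deleg` (delegating voters contribute through their dRep's ballot, the rest vote their
revealed preferences directly). -/
def totalScore {ι : Type} (I : PSInstance n m) (D : ι → Fin m → Bool)
    (deleg : Fin n → Option ι) (j : Fin m) : ℕ :=
  (univ.filter fun i => (match deleg i with
    | some d => D d j
    | none => I.visible i j && I.intrinsic i j) = true).card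

/-- A delegation assignment is valid (w.r.t. per-voter reluctance parameters `k`) if every
delegating voter is attracted by their chosen dRep, and every voter attracted by at least
one dRep delegates (to an arbitrary one of them). -/
def ValidDeleg {ι : Type} (I : PSInstance n m) (k : Fin n → ℕ) (D : ι → Fin m → Bool)
    (deleg : Fin n → Option ι) : Prop :=
  (∀ i d, deleg i = some d → I.Attracted (k i) i (D d)) ∧
  (∀ i, (∃ d, I.Attracted (k i) i (D d)) → deleg i ≠ none)

/-- `j` is elected: it maximizes total score, ties broken in favor of maximum intrinsic score. -/
def Elected {ι : Type} (I : PSInstance n m) (D : ι → Fin m → Bool)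
    (deleg : Fin n → Option ι) (j : Fin m) : Prop :=
  (∀ j', I.totalScore D deleg j' ≤ I.totalScore D deleg j) ∧
  (∀ j', I.totalScore D deleg j' = I.totalScore D deleg j → I.sc j' ≤ I.sc j)

/-- `j` is elected when ties are broken in favor of maximum *revealed* score. -/
def ElectedRev {ι : Type} (I : PSInstance n m) (D : ι → Fin m → Bool)
    (deleg : Fin n → Option ι) (j : Fin m) : Prop :=
  (∀ j', I.totalScore D deleg j' ≤ I.totalScore D deleg j) ∧
  (∀ j', I.totalScore D deleg j' = I.totalScore D deleg j → I.rsc j' ≤ I.rsc j)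

end PSInstance


/-- Auxiliary: a set of voters all lying in the same block of size `r` has at most `r` elements. -/
lemma block_card_le {r q : ℕ} (hr : 0 < r) (S : Finset (Fin (r * q)))
    (h : ∀ i ∈ S, ∀ i' ∈ S, i.val / r = i'.val / r) : S.card ≤ r := by
  classical
  have key := Finset.card_le_card_of_injOn
    (f := fun i : Fin (r * q) => (⟨i.val % r, Nat.mod_lt _ hr⟩ : Fin r))
    (s := S) (t := Finset.univ) (fun _ _ => Finset.mem_univ _) ?_
  · simpa using key
  · intro a ha b hb hab
    have h1 := h a ha b hb
    have h2 : a.val % r = b.val % r := by simpa [Fin.ext_iff] using hab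
    apply Fin.ext
    calc a.val = r * (a.val / r) + a.val % r := (Nat.div_add_mod a.val r).symm
      _ = r * (b.val / r) + b.val % r := by rw [h1, h2]
      _ = b.val := Nat.div_add_mod b.val r

/-- The hard instance: `q` blocks of `r` voters; proposal `0` is the hidden optimum,
proposal `1+g` is block `g`'s common proposal, proposal `1+q+g` is block `g`'s
leader-only proposal. -/
def hardInst (r q : ℕ) : PSInstance (r * q) (2 * q + 1) where
  intrinsic i j := decide (j.val = 0 ∨ j.val = 1 + i.val / r ∨
    (j.val = 1 + q + i.val / r ∧ i.val % r = 0))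
  visible i j := decide (j.val = 1 + i.val / r ∨ j.val = 1 + q + i.val / r)

/-- For every `r ≥ 2` and every positive `n` divisible by `r` there is an
instance with `n` voters and some reluctance parameter `k > 0` whose largest coherent set
has size `r`, the optimal intrinsic score is `n`, and every single dRep leads to an
elected proposal of intrinsic score at most `r` (no better than `n/r`-approximation). -/
theorem stmt6 (r n : ℕ) (hr : 2 ≤ r) (hn : 0 < n) (hdvd : r ∣ n) :
    ∃ (m k : ℕ) (I : PSInstance n m), 0 < k ∧
      (∀ S : Finset (Fin n), (∀ i ∈ S, ∀ i' ∈ S, I.Rset i = I.Rset i') → S.card ≤ r) ∧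
      (∃ S : Finset (Fin n), (∀ i ∈ S, ∀ i' ∈ S, I.Rset i = I.Rset i') ∧ S.card = r) ∧
      (∃ j, I.IsOpt j ∧ I.sc j = n) ∧
      ∀ t : Fin m → Bool, ∀ deleg : Fin n → Option Unit,
        I.ValidDeleg (fun _ => k) (fun _ => t) deleg →
        ∀ j, I.Elected (fun _ => t) deleg j → I.sc j ≤ r := by
  classical
  obtain ⟨q, rfl⟩ := hdvd
  have hr0 : 0 < r := by omega
  have hq : 0 < q := by
    rcases Nat.eq_zero_or_pos q with h | h
    · simp [h] at hn
    · exact h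
  have hdivlt : ∀ i : Fin (r * q), i.val / r < q := by
    intro i
    have hi := i.isLt
    rw [Nat.div_lt_iff_lt_mul hr0]
    calc i.val < r * q := hi
      _ = q * r := mul_comm r q
  refine ⟨2 * q + 1, 2, hardInst r q, by norm_num, ?_, ?_, ?_, ?_⟩
  · -- every coherent set has size ≤ r
    intro S hS
    apply block_card_le hr0 S
    intro i hi i' hi'
    have hRe := hS i hi i' hi'
    have hmem : (⟨1 + i.val / r, by have := hdivlt i; omega⟩ : Fin (2 * q + 1)) ∈
        (hardInst r q).Rset i := by
      simp [PSInstance.Rset, hardInst]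
    rw [hRe] at hmem
    simp [PSInstance.Rset, hardInst] at hmem
    have h1 := hdivlt i
    have h2 := hdivlt i'
    generalize i.val / r = x at *
    generalize i'.val / r = y at *
    omega
  · -- a coherent set of size exactly r : block 0
    have hle : r ≤ r * q := Nat.le_mul_of_pos_right r hq
    refine ⟨Finset.map (Fin.castLEEmb hle) Finset.univ, ?_, ?_⟩
    · intro i hi i' hi'
      rw [Finset.mem_map] at hi hi'
      obtain ⟨a, -, rfl⟩ := hi
      obtain ⟨a', -, rfl⟩ := hi'
      have d1 : (a : ℕ) / r = 0 := Nat.div_eq_of_lt a.isLt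
      have d2 : (a' : ℕ) / r = 0 := Nat.div_eq_of_lt a'.isLt
      ext jj
      simp [PSInstance.Rset, hardInst, d1, d2]
    · simp
  · -- proposal 0 is optimal with score n
    have hsc0 : (hardInst r q).sc ⟨0, by omega⟩ = r * q := by
      simp [PSInstance.sc, hardInst]
    refine ⟨⟨0, by omega⟩, ?_, hsc0⟩
    intro j'
    rw [hsc0]
    calc (hardInst r q).sc j' ≤ (Finset.univ : Finset (Fin (r * q))).card :=
          Finset.card_filter_le _ _
      _ = r * q := by simp
  · -- main: every single dRep elects a proposal of score ≤ r
    rintro t deleg ⟨hdel, -⟩ j ⟨hmax, -⟩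
    -- delegating voters agree with t on all visible proposals
    have hagree : ∀ i : Fin (r * q), deleg i ≠ none → ∀ jj : Fin (2 * q + 1),
        (hardInst r q).visible i jj = true → (hardInst r q).intrinsic i jj = t jj := by
      intro i hi jj hv
      obtain ⟨d, hd⟩ : ∃ d, deleg i = some d := by
        cases h : deleg i with
        | none => exact absurd h hi
        | some d => exact ⟨d, rfl⟩
      have hatt := hdel i d hd
      have hRs : (hardInst r q).Rset i =
          {(⟨1 + i.val / r, by have := hdivlt i; omega⟩ : Fin (2 * q + 1)),
           ⟨1 + q + i.val / r, by have := hdivlt i; omega⟩} := by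
        ext jj'
        simp [PSInstance.Rset, hardInst, Fin.ext_iff, -Fin.val_eq_zero_iff]
      have hmi : (hardInst r q).mi i = 2 := by
        unfold PSInstance.mi
        rw [hRs, Finset.card_insert_of_notMem (by simp [Fin.ext_iff]; omega),
          Finset.card_singleton]
      have hdist : (hardInst r q).dist i t = 0 := by
        have h2 := hatt
        unfold PSInstance.Attracted at h2
        rw [hmi] at h2
        simpa using h2
      unfold PSInstance.dist at hdist
      rw [Finset.card_eq_zero, Finset.filter_eq_empty_iff] at hdist
      have := hdist (Finset.mem_univ jj)
      by_contra hne
      exact this ⟨hv, hne⟩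
    -- any proposal other than 0 has score ≤ r
    have hscbound : ∀ jj : Fin (2 * q + 1), jj.val ≠ 0 → (hardInst r q).sc jj ≤ r := by
      intro jj h0
      apply block_card_le hr0
      intro i hi i' hi'
      simp [PSInstance.sc, hardInst, -Fin.val_eq_zero_iff] at hi hi'
      have h1 := hdivlt i
      have h2 := hdivlt i'
      generalize i.val / r = x at *
      generalize i'.val / r = y at *
      omega
    by_cases hj0 : j.val = 0
    swap
    · exact hscbound j hj0
    exfalso
    -- proposal 0 is invisible to everybody
    have hinvis : ∀ i : Fin (r * q), (hardInst r q).visible i j = false := by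
      intro i
      simp only [hardInst, decide_eq_false_iff_not]
      rw [hj0]
      generalize i.val / r = x
      omega
    by_cases hD : ∀ i : Fin (r * q), deleg i = none
    · -- nobody delegates: proposal 1 (block 0's common proposal) gets score ≥ r > 0
      have hzero : (hardInst r q).totalScore (fun _ => t) deleg j = 0 := by
        unfold PSInstance.totalScore
        rw [Finset.card_eq_zero, Finset.filter_eq_empty_iff]
        intro i _
        rw [hD i]
        simp [hinvis i]
      have hpos : 0 < (hardInst r q).totalScore (fun _ => t) deleg ⟨1, by omega⟩ := by
        unfold PSInstance.totalScore
        rw [Finset.card_pos]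
        refine ⟨⟨0, hn⟩, ?_⟩
        rw [Finset.mem_filter]
        refine ⟨Finset.mem_univ _, ?_⟩
        rw [hD]
        simp [hardInst, Nat.zero_div]
      have := hmax ⟨1, by omega⟩
      omega
    · push_neg at hD
      obtain ⟨i₀, hi₀⟩ := hD
      set b := i₀.val / r with hb
      clear_value b
      have hbq : b < q := hb ▸ hdivlt i₀
      -- a voter in the same block as i₀ with the opposite leadership status
      obtain ⟨i₁, h1a, h1b⟩ : ∃ i₁ : Fin (r * q),
          i₁.val / r = b ∧ ¬(i₁.val % r = 0 ↔ i₀.val % r = 0) := by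
        by_cases hl : i₀.val % r = 0
        · refine ⟨⟨r * b + 1, ?_⟩, ?_, ?_⟩
          · calc r * b + 1 < r * b + r := by omega
              _ = r * (b + 1) := by ring
              _ ≤ r * q := Nat.mul_le_mul_left r hbq
          · show (r * b + 1) / r = b
            rw [Nat.mul_add_div hr0]
            have : 1 / r = 0 := Nat.div_eq_of_lt (by omega)
            omega
          · show ¬((r * b + 1) % r = 0 ↔ i₀.val % r = 0)
            rw [Nat.mul_add_mod]
            have : 1 % r = 1 := Nat.mod_eq_of_lt (by omega)
            rw [this, hl]
            omega
        · refine ⟨⟨r * b, ?_⟩, ?_, ?_⟩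
          · exact Nat.mul_lt_mul_left hr0 |>.mpr hbq
          · show (r * b) / r = b
            exact Nat.mul_div_cancel_left b hr0
          · show ¬((r * b) % r = 0 ↔ i₀.val % r = 0)
            rw [Nat.mul_mod_right]
            simp [hl]
      -- i₁ does not delegate
      have hne1 : deleg i₁ = none := by
        by_contra h
        have e0 := hagree i₀ hi₀ ⟨1 + q + b, by omega⟩
          (by simp only [hardInst, decide_eq_true_eq]; exact Or.inr (by rw [hb]))
        have e1 := hagree i₁ h ⟨1 + q + b, by omega⟩
          (by simp only [hardInst, decide_eq_true_eq]; exact Or.inr (by rw [h1a]))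
        rw [← e0] at e1
        simp only [hardInst, decide_eq_decide] at e1
        rw [h1a, ← hb] at e1
        generalize i₁.val % r = w at e1 h1b
        generalize i₀.val % r = z at e1 h1b
        omega
      -- block b's common proposal strictly beats proposal 0
      have hvj1 : (1 : ℕ) + b < 2 * q + 1 := by omega
      have htj1 : t ⟨1 + b, hvj1⟩ = true := by
        have e0 := hagree i₀ hi₀ ⟨1 + b, hvj1⟩ (by simp [hardInst]; exact Or.inl hb)
        rw [← e0]
        simp [hardInst]
        exact Or.inl hb
      have hlt : (hardInst r q).totalScore (fun _ => t) deleg j <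
          (hardInst r q).totalScore (fun _ => t) deleg ⟨1 + b, hvj1⟩ := by
        unfold PSInstance.totalScore
        apply Finset.card_lt_card
        rw [Finset.ssubset_iff_of_subset]
        · refine ⟨i₁, ?_, ?_⟩
          · rw [Finset.mem_filter]
            refine ⟨Finset.mem_univ _, ?_⟩
            rw [hne1]
            simp [hardInst, h1a]
          · rw [Finset.mem_filter]
            rintro ⟨-, hc⟩
            rw [hne1] at hc
            simp [hinvis i₁] at hc
        · intro i hi
          rw [Finset.mem_filter] at hi ⊢
          refine ⟨Finset.mem_univ _, ?_⟩
          obtain ⟨-, hc⟩ := hi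
          have hnn : deleg i ≠ none := by
            intro hnone
            rw [hnone] at hc
            simp [hinvis i] at hc
          obtain ⟨d', hd'⟩ : ∃ d', deleg i = some d' := by
            cases hh : deleg i with
            | none => exact absurd hh hnn
            | some d => exact ⟨d, rfl⟩
          rw [hd']
          exact htj1
      have := hmax ⟨1 + b, hvj1⟩
      omega
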